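/- arXiv:2605.04614 — 3 statements merged into one kernel-verified Lean document; each statement's English description precedes it below -/
import Mathlib

section
/- The number of subgroups of index d in the group ℤ × ℤ is equal to the sum of divisors of d, and in particular is at most d². -/
open AddSubgroup

def hnf (a b t : ℤ) : (ℤ × ℤ) →+ (ℤ × ℤ) where
  toFun p := (p.1 * a + p.2 * t, p.2 * b)
  map_zero' := by simp
  map_add' p q := by refine Prod.ext ?_ ?_ <;> simp <;> ring

lemma mem_hnf_range {a b t : ℤ} {p : ℤ × ℤ} :
    p ∈ (hnf a b t).range ↔ ∃ m n : ℤ, m * a + n * t = p.1 ∧ n * b = p.2 := by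
  constructor
  · rintro ⟨⟨m, n⟩, rfl⟩; exact ⟨m, n, rfl, rfl⟩
  · rintro ⟨m, n, h1, h2⟩; exact ⟨(m, n), Prod.ext h1 h2⟩

lemma hnf_index (a b t : ℤ) (ha : 0 < a) (hb : 0 < b) :
    (hnf a b t).range.index = a.toNat * b.toNat := by
  set an := a.toNat with han
  set bn := b.toNat with hbn
  have hac : (an : ℤ) = a := Int.toNat_of_nonneg ha.le
  have hbc : (bn : ℤ) = b := Int.toNat_of_nonneg hb.le
  set ψ : (ℤ × ℤ) →+ ZMod bn :=
    (Int.castAddHom (ZMod bn)).comp (AddMonoidHom.snd ℤ ℤ) with hψ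
  have hψker : ∀ p : ℤ × ℤ, p ∈ ψ.ker ↔ b ∣ p.2 := by
    intro p
    rw [AddMonoidHom.mem_ker, hψ]
    simp only [AddMonoidHom.comp_apply, AddMonoidHom.coe_snd, Int.coe_castAddHom]
    rw [ZMod.intCast_zmod_eq_zero_iff_dvd, hbc]
  have hle : (hnf a b t).range ≤ ψ.ker := by
    rintro p ⟨⟨m, n⟩, rfl⟩
    rw [hψker]
    exact ⟨n, by simp [hnf, mul_comm]⟩
  have hψsurj : Function.Surjective ψ := by
    intro z
    obtain ⟨y, rfl⟩ := ZMod.intCast_surjective z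
    exact ⟨(0, y), rfl⟩
  have hKind : ψ.ker.index = bn := by
    rw [AddSubgroup.index_ker ψ, AddMonoidHom.range_eq_top.mpr hψsurj,
      Nat.card_congr AddSubgroup.topEquiv.toEquiv, Nat.card_zmod]
  -- the embedding e : ℤ × ℤ ≃ ψ.ker
  have hmem : ∀ p : ℤ × ℤ, (p.1, p.2 * b) ∈ ψ.ker := by
    intro p; rw [hψker]; exact Dvd.intro p.2 (mul_comm _ _)
  set e : (ℤ × ℤ) →+ ψ.ker :=
    { toFun := fun p => ⟨(p.1, p.2 * b), hmem p⟩
      map_zero' := by ext <;> simp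
      map_add' := fun p q => by ext <;> simp <;> ring } with he
  have hesurj : Function.Surjective e := by
    rintro ⟨⟨x, y⟩, hy⟩
    rw [hψker] at hy
    obtain ⟨n, rfl⟩ := hy
    exact ⟨(x, n), by ext <;> simp [he, mul_comm]⟩
  set χ : (ℤ × ℤ) →+ ZMod an :=
    AddMonoidHom.mk' (fun p => ((p.1 - t * p.2 : ℤ) : ZMod an))
      (by intro p q; simp only [Prod.fst_add, Prod.snd_add]; push_cast; ring) with hχ
  have hcomap : ((hnf a b t).range.addSubgroupOf ψ.ker).comap e = χ.ker := by
    ext p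
    rw [AddSubgroup.mem_comap, AddSubgroup.mem_addSubgroupOf, AddMonoidHom.mem_ker, hχ]
    simp only [AddMonoidHom.mk'_apply]
    rw [ZMod.intCast_zmod_eq_zero_iff_dvd, hac]
    constructor
    · intro h
      have := mem_hnf_range.mp h
      obtain ⟨m, n, h1, h2⟩ := this
      simp only [he, AddMonoidHom.coe_mk, ZeroHom.coe_mk] at h1 h2
      have hn : n = p.2 := by
        have := mul_right_cancel₀ (ne_of_gt hb) h2
        exact this
      subst hn
      exact ⟨m, by linarith⟩
    · rintro ⟨m, hm⟩
      apply mem_hnf_range.mpr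
      exact ⟨m, p.2, by simp [he]; linarith, by simp [he]⟩
  have hχsurj : Function.Surjective χ := by
    intro z
    obtain ⟨x, rfl⟩ := ZMod.intCast_surjective z
    exact ⟨(x, 0), by simp [hχ]⟩
  have hrel : (hnf a b t).range.relIndex ψ.ker = an := by
    rw [AddSubgroup.relIndex, ← AddSubgroup.index_comap_of_surjective _ hesurj, hcomap,
      AddSubgroup.index_ker χ, AddMonoidHom.range_eq_top.mpr hχsurj,
      Nat.card_congr AddSubgroup.topEquiv.toEquiv, Nat.card_zmod]
  have := AddSubgroup.relIndex_mul_index hle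
  rw [hrel, hKind] at this
  omega

lemma hnf_inj {a b t a' b' t' : ℤ} (ha : 0 < a) (hb : 0 < b) (ht0 : 0 ≤ t) (ht : t < a)
    (ha' : 0 < a') (hb' : 0 < b') (ht0' : 0 ≤ t') (ht' : t' < a')
    (h : (hnf a b t).range = (hnf a' b' t').range) : a = a' ∧ b = b' ∧ t = t' := by
  have hmem : ∀ p : ℤ × ℤ, p ∈ (hnf a b t).range ↔ p ∈ (hnf a' b' t').range := by
    intro p; rw [h]
  -- a = a'
  have haa : a = a' := by
    have h1 : (a, (0:ℤ)) ∈ (hnf a b t).range := mem_hnf_range.mpr ⟨1, 0, by ring, by ring⟩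
    have h2 : (a', (0:ℤ)) ∈ (hnf a' b' t').range := mem_hnf_range.mpr ⟨1, 0, by ring, by ring⟩
    obtain ⟨m, n, hm1, hm2⟩ := mem_hnf_range.mp ((hmem _).mp h1)
    obtain ⟨m', n', hm1', hm2'⟩ := mem_hnf_range.mp ((hmem _).mpr h2)
    have hn : n = 0 := by
      have := mul_eq_zero.mp hm2
      rcases this with h | h
      · exact h
      · exact absurd h (ne_of_gt hb')
    have hn' : n' = 0 := by
      have := mul_eq_zero.mp hm2'
      rcases this with h | h
      · exact h
      · exact absurd h (ne_of_gt hb)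
    subst hn; subst hn'
    simp only [zero_mul, add_zero, mul_zero] at hm1 hm1'
    exact Int.dvd_antisymm ha.le ha'.le ⟨m', hm1'.symm ▸ by ring⟩ ⟨m, hm1.symm ▸ by ring⟩
  subst haa
  -- from (t, b) ∈ range', get b' ∣ b and conversely
  have h1 : ((t:ℤ), b) ∈ (hnf a b t).range := mem_hnf_range.mpr ⟨0, 1, by ring, by ring⟩
  have h2 : ((t':ℤ), b') ∈ (hnf a b' t').range := mem_hnf_range.mpr ⟨0, 1, by ring, by ring⟩
  obtain ⟨m, n, hm1, hm2⟩ := mem_hnf_range.mp ((hmem _).mp h1)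
  obtain ⟨m', n', hm1', hm2'⟩ := mem_hnf_range.mp ((hmem _).mpr h2)
  dsimp only at hm1 hm2 hm1' hm2'
  have hbb : b = b' := by
    refine Int.dvd_antisymm hb.le hb'.le ⟨n', by rw [← hm2']; ring⟩ ⟨n, by rw [← hm2]; ring⟩
  subst hbb
  refine ⟨rfl, rfl, ?_⟩
  have hn : n = 1 := by
    have : n * b = 1 * b := by rw [hm2]; ring
    exact mul_right_cancel₀ (ne_of_gt hb) this
  subst hn
  -- m * a + t' = t
  have : t = t % a := (Int.emod_eq_of_lt ht0 ht).symm
  rw [this, ← hm1]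
  have : m * a + 1 * t' = t' + a * m := by ring
  rw [this, Int.add_mul_emod_self_left, Int.emod_eq_of_lt ht0' ht']

lemma exists_hnf (H : AddSubgroup (ℤ × ℤ)) (hH : H.index ≠ 0) :
    ∃ a b t : ℤ, 0 < a ∧ 0 < b ∧ 0 ≤ t ∧ t < a ∧ H = (hnf a b t).range := by
  obtain ⟨b₀, hB⟩ := Int.subgroup_cyclic (H.map (AddMonoidHom.snd ℤ ℤ))
  obtain ⟨a₀, hA⟩ := Int.subgroup_cyclic (H.comap (AddMonoidHom.inl ℤ ℤ))
  have memB : ∀ y : ℤ, (∃ x : ℤ, (x, y) ∈ H) ↔ b₀ ∣ y := by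
    intro y
    constructor
    · rintro ⟨x, hx⟩
      have : y ∈ H.map (AddMonoidHom.snd ℤ ℤ) := ⟨(x, y), hx, rfl⟩
      rw [hB, AddSubgroup.mem_closure_singleton] at this
      obtain ⟨n, hn⟩ := this
      exact ⟨n, by rw [← hn]; simp [zsmul_eq_mul, Int.cast_id]; ring⟩
    · rintro ⟨n, rfl⟩
      have : b₀ ∈ H.map (AddMonoidHom.snd ℤ ℤ) := by
        rw [hB]; exact AddSubgroup.mem_closure_singleton.mpr ⟨1, one_zsmul _⟩
      obtain ⟨⟨x, y⟩, hxy, hy⟩ := this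
      simp only [AddMonoidHom.coe_snd] at hy
      subst hy
      refine ⟨n * x, ?_⟩
      have : ((n : ℤ) • ((x, y) : ℤ × ℤ)) ∈ H := zsmul_mem hxy n
      simpa [Prod.smul_def, smul_eq_mul, mul_comm] using this
  have memA : ∀ x : ℤ, ((x, (0:ℤ)) ∈ H) ↔ a₀ ∣ x := by
    intro x
    have : (x, (0:ℤ)) ∈ H ↔ x ∈ H.comap (AddMonoidHom.inl ℤ ℤ) := by
      simp [AddSubgroup.mem_comap]
    rw [this, hA, AddSubgroup.mem_closure_singleton]
    constructor
    · rintro ⟨n, hn⟩; exact ⟨n, by rw [← hn]; simp [zsmul_eq_mul, Int.cast_id]; ring⟩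
    · rintro ⟨n, hn⟩; exact ⟨n, by simp [zsmul_eq_mul, Int.cast_id, hn]; ring⟩
  -- b₀ ≠ 0
  have hb₀ : b₀ ≠ 0 := by
    rintro rfl
    apply hH
    rw [AddSubgroup.index]
    have : Function.Injective (fun y : ℤ => (QuotientAddGroup.mk ((0, y) : ℤ × ℤ) : (ℤ × ℤ) ⧸ H)) := by
      intro y y' hyy
      have : -((0:ℤ), y) + (0, y') ∈ H := QuotientAddGroup.eq.mp hyy
      have h2 : ((0 : ℤ), y' - y) ∈ H := by
        convert this using 2 <;> simp <;> try ring
      have := (memB (y' - y)).mp ⟨0, h2⟩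
      simp only [zero_dvd_iff, sub_eq_zero] at this
      omega
    have := Infinite.of_injective _ this
    exact Nat.card_eq_zero_of_infinite
  have ha₀ : a₀ ≠ 0 := by
    rintro rfl
    apply hH
    rw [AddSubgroup.index]
    have : Function.Injective (fun x : ℤ => (QuotientAddGroup.mk ((x, 0) : ℤ × ℤ) : (ℤ × ℤ) ⧸ H)) := by
      intro x x' hxx
      have : -((x:ℤ), (0:ℤ)) + (x', 0) ∈ H := QuotientAddGroup.eq.mp hxx
      have h2 : ((x' - x : ℤ), (0:ℤ)) ∈ H := by
        convert this using 2 <;> simp <;> try ring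
      have := (memA (x' - x)).mp h2
      simp only [zero_dvd_iff, sub_eq_zero] at this
      omega
    have := Infinite.of_injective _ this
    exact Nat.card_eq_zero_of_infinite
  set a := |a₀| with ha_def
  set b := |b₀| with hb_def
  have ha : 0 < a := abs_pos.mpr ha₀
  have hb : 0 < b := abs_pos.mpr hb₀
  have memA' : ∀ x : ℤ, ((x, (0:ℤ)) ∈ H) ↔ a ∣ x := by
    intro x; rw [memA, ha_def, abs_dvd]
  have memB' : ∀ y : ℤ, (∃ x : ℤ, (x, y) ∈ H) ↔ b ∣ y := by
    intro y; rw [memB, hb_def, abs_dvd]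
  obtain ⟨t', ht'⟩ := (memB' b).mpr dvd_rfl
  set t := t' % a with ht_def
  have ht0 : 0 ≤ t := Int.emod_nonneg t' (ne_of_gt ha)
  have htlt : t < a := Int.emod_lt_of_pos t' ha
  have htb : ((t : ℤ), b) ∈ H := by
    have hsub : ((a * (t' / a) : ℤ), (0:ℤ)) ∈ H := (memA' _).mpr ⟨t' / a, rfl⟩
    have : ((t', b) : ℤ × ℤ) - (a * (t' / a), 0) ∈ H := sub_mem ht' hsub
    convert this using 2
    · simp only [Prod.fst_sub]; rw [ht_def, Int.emod_def]
    · simp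
  refine ⟨a, b, t, ha, hb, ht0, htlt, ?_⟩
  ext ⟨x, y⟩
  rw [mem_hnf_range]
  constructor
  · intro hxy
    obtain ⟨n, hy⟩ := (memB' y).mp ⟨x, hxy⟩
    have hsub : ((x, y) : ℤ × ℤ) - n • ((t:ℤ), b) ∈ H := sub_mem hxy (zsmul_mem htb n)
    have h0 : ((x - n * t, (0:ℤ)) : ℤ × ℤ) ∈ H := by
      convert hsub using 2 <;> · simp [zsmul_eq_mul, Int.cast_id, hy]; try ring
    obtain ⟨m, hm⟩ := (memA' _).mp h0
    exact ⟨m, n, by linarith, by rw [hy]; ring⟩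
  · rintro ⟨m, n, h1, h2⟩
    dsimp only at h1 h2
    have : (m • ((a : ℤ), (0:ℤ)) + n • ((t:ℤ), b)) ∈ H :=
      add_mem (zsmul_mem ((memA' a).mpr dvd_rfl) m) (zsmul_mem htb n)
    convert this using 2 <;> · simp [zsmul_eq_mul, Int.cast_id]; linarith

/-- The number of subgroups of index `d` in `ℤ × ℤ` equals the sum of divisors of `d`,
and in particular is at most `d²`. -/
theorem index_d_subgroups_of_int_prod (d : ℕ) (hd : 0 < d) :
    Nat.card {H : AddSubgroup (ℤ × ℤ) // H.index = d} = ∑ k ∈ d.divisors, k ∧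
    Nat.card {H : AddSubgroup (ℤ × ℤ) // H.index = d} ≤ d ^ 2 := by
  have key : Nat.card {H : AddSubgroup (ℤ × ℤ) // H.index = d} = ∑ k ∈ d.divisors, k := by
    set T := (p : d.divisorsAntidiagonal) × Fin p.1.1 with hT
    have hpos : ∀ p : d.divisorsAntidiagonal, 0 < p.1.1 ∧ 0 < p.1.2 := by
      rintro ⟨⟨a, b⟩, hp⟩
      obtain ⟨hab, hd0⟩ := Nat.mem_divisorsAntidiagonal.mp hp
      simp only at hab
      refine ⟨Nat.pos_of_ne_zero ?_, Nat.pos_of_ne_zero ?_⟩ <;> rintro rfl <;> simp at hab <;> omega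
    set F : T → {H : AddSubgroup (ℤ × ℤ) // H.index = d} := fun x =>
      ⟨(hnf x.1.1.1 x.1.1.2 x.2).range, by
        have h1 := hpos x.1
        rw [hnf_index _ _ _ (by exact_mod_cast h1.1) (by exact_mod_cast h1.2)]
        simp only [Int.toNat_natCast]
        exact (Nat.mem_divisorsAntidiagonal.mp x.1.2).1⟩ with hF
    have hbij : Function.Bijective F := by
      constructor
      · rintro ⟨⟨⟨a, b⟩, hab⟩, t⟩ ⟨⟨⟨a', b'⟩, hab'⟩, t'⟩ heq
        have h1 := hpos ⟨(a, b), hab⟩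
        have h2 := hpos ⟨(a', b'), hab'⟩
        have hr : (hnf a b t).range = (hnf a' b' t').range := by
          have := congrArg (fun x => x.1) heq
          simpa [hF] using this
        obtain ⟨e1, e2, e3⟩ := hnf_inj (a := a) (b := b) (t := t)
          (by exact_mod_cast h1.1) (by exact_mod_cast h1.2) (by positivity)
          (by exact_mod_cast t.2) (by exact_mod_cast h2.1) (by exact_mod_cast h2.2)
          (by positivity) (by exact_mod_cast t'.2) hr
        have ea : a = a' := by exact_mod_cast e1
        have eb : b = b' := by exact_mod_cast e2
        have et : (t : ℕ) = (t' : ℕ) := by exact_mod_cast e3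
        subst ea; subst eb
        refine Sigma.ext (Subtype.ext rfl) ?_
        exact heq_of_eq (Fin.ext et)
      · rintro ⟨H, hH⟩
        obtain ⟨a, b, t, ha, hb, ht0, ht, rfl⟩ := exists_hnf H (by omega)
        have hidx : a.toNat * b.toNat = d := by
          rw [← hnf_index a b t ha hb]; exact hH
        have hmem : (a.toNat, b.toNat) ∈ d.divisorsAntidiagonal :=
          Nat.mem_divisorsAntidiagonal.mpr ⟨hidx, by omega⟩
        have htlt : t.toNat < a.toNat := by omega
        refine ⟨⟨⟨(a.toNat, b.toNat), hmem⟩, ⟨t.toNat, htlt⟩⟩, ?_⟩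
        have e1 : ((a.toNat : ℤ)) = a := Int.toNat_of_nonneg ha.le
        have e2 : ((b.toNat : ℤ)) = b := Int.toNat_of_nonneg hb.le
        have e3 : ((t.toNat : ℤ)) = t := Int.toNat_of_nonneg ht0
        refine Subtype.ext ?_
        show (hnf ((a.toNat : ℤ)) ((b.toNat : ℤ)) ((t.toNat : ℤ))).range = (hnf a b t).range
        rw [e1, e2, e3]
    rw [← Nat.card_eq_of_bijective F hbij]
    have hc : Nat.card T = ∑ p ∈ d.divisorsAntidiagonal, p.1 := by
      rw [Nat.card_eq_fintype_card, Fintype.card_sigma]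
      simp only [Fintype.card_fin]
      exact Finset.sum_coe_sort d.divisorsAntidiagonal (fun p => p.1)
    rw [hc, Nat.sum_divisorsAntidiagonal (f := fun a _ => a)]
  refine ⟨key, ?_⟩
  rw [key]
  calc ∑ k ∈ d.divisors, k ≤ ∑ _k ∈ d.divisors, d :=
        Finset.sum_le_sum fun k hk => Nat.le_of_dvd hd (Nat.mem_divisors.mp hk).1
    _ = d.divisors.card * d := by rw [Finset.sum_const, smul_eq_mul]
    _ ≤ d * d := by
        have hsub : d.divisors ⊆ Finset.Icc 1 d := fun k hk => by
          obtain ⟨h1, h2⟩ := Nat.mem_divisors.mp hk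
          exact Finset.mem_Icc.mpr ⟨Nat.pos_of_ne_zero
            (by rintro rfl; exact h2 (zero_dvd_iff.mp h1)), Nat.le_of_dvd hd h1⟩
        have hcard := Finset.card_le_card hsub
        rw [Nat.card_Icc] at hcard
        exact Nat.mul_le_mul_right d (by omega)
    _ = d ^ 2 := (sq d).symm
end

section
/- A surface group of genus k > 1 has no nontrivial cyclic normal subgroup. More precisely, if G is the fundamental group of a closed orientable surface of genus k ≥ 2 and N is a normal subgroup of G that is cyclic, then N is trivial. -/
open scoped commutatorElement

/-- The surface relator `[a₁,b₁]⋯[a_k,b_k]` in the free group on `2k` generators. -/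
def surfaceRelator (k : ℕ) : FreeGroup (Fin k × Fin 2) :=
  (List.ofFn fun i : Fin k => ⁅FreeGroup.of (i, (0 : Fin 2)), FreeGroup.of (i, (1 : Fin 2))⁆).prod

/-- The fundamental group of a closed orientable surface of genus `k`, given by the
presentation `⟨a₁, b₁, …, a_k, b_k ∣ [a₁,b₁]⋯[a_k,b_k]⟩`. -/
abbrev SurfaceGroup (k : ℕ) : Type :=
  PresentedGroup ({surfaceRelator k} : Set (FreeGroup (Fin k × Fin 2)))

/-! ### Heisenberg group over ℤ -/

@[ext]
structure H3 where
  x : ℤ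
  y : ℤ
  z : ℤ

namespace H3

instance : One H3 := ⟨⟨0,0,0⟩⟩
instance : Mul H3 := ⟨fun a b => ⟨a.x + b.x, a.y + b.y, a.z + b.z + a.x * b.y⟩⟩
instance : Inv H3 := ⟨fun a => ⟨-a.x, -a.y, a.x * a.y - a.z⟩⟩

lemma mul_def (a b : H3) : a * b = ⟨a.x + b.x, a.y + b.y, a.z + b.z + a.x * b.y⟩ := rfl
lemma one_def : (1 : H3) = ⟨0,0,0⟩ := rfl
lemma inv_def (a : H3) : a⁻¹ = ⟨-a.x, -a.y, a.x * a.y - a.z⟩ := rfl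

instance : Group H3 where
  mul_assoc a b c := by ext <;> simp [mul_def] <;> ring
  one_mul a := by ext <;> simp [mul_def, one_def]
  mul_one a := by ext <;> simp [mul_def, one_def]
  inv_mul_cancel a := by ext <;> simp [mul_def, one_def, inv_def] <;> ring

def η : H3 := ⟨0,0,1⟩

lemma η_pow (n : ℕ) : η ^ n = ⟨0, 0, (n : ℤ)⟩ := by
  induction n with
  | zero => rfl
  | succ n ih => rw [pow_succ, ih]; ext <;> simp [η, mul_def] <;> ring

lemma η_zpow (n : ℤ) : η ^ n = ⟨0, 0, n⟩ := by
  rcases n with n | n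
  · simpa using η_pow n
  · rw [Int.negSucc_eq, zpow_neg, ← Nat.cast_add_one, zpow_natCast, η_pow]
    ext <;> simp [inv_def]

lemma η_zpow_eq_one_iff (n : ℤ) : η ^ n = 1 ↔ n = 0 := by
  rw [η_zpow]
  constructor
  · intro h; simpa [one_def] using congrArg H3.z h
  · rintro rfl; rfl

lemma η_inv_zpow_eq_one_iff (n : ℤ) : (η⁻¹) ^ n = 1 ↔ n = 0 := by
  rw [inv_zpow, inv_eq_one, η_zpow_eq_one_iff]

lemma commutator_AB : ⁅(⟨1,0,0⟩ : H3), (⟨0,1,0⟩ : H3)⁆ = η := by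
  show (⟨1,0,0⟩ : H3) * ⟨0,1,0⟩ * (⟨1,0,0⟩ : H3)⁻¹ * (⟨0,1,0⟩ : H3)⁻¹ = η
  ext <;> simp [η, mul_def, inv_def]

end H3

/-! ### avoidance lemma in ℤ × ℤ -/

lemma exists_avoid (v : ℤ × ℤ) :
    ∃ c : ℤ × ℤ, (c = (1,0) ∨ c = (0,1) ∨ c = (1,1)) ∧ c ≠ 0 ∧ c ≠ v ∧ c ≠ -v := by
  by_cases h1 : (1,0) ≠ v ∧ ((1:ℤ),(0:ℤ)) ≠ -v
  · exact ⟨(1,0), Or.inl rfl, by decide, h1.1, h1.2⟩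
  by_cases h2 : ((0:ℤ),(1:ℤ)) ≠ v ∧ ((0:ℤ),(1:ℤ)) ≠ -v
  · exact ⟨(0,1), Or.inr (Or.inl rfl), by decide, h2.1, h2.2⟩
  · refine ⟨(1,1), Or.inr (Or.inr rfl), by decide, ?_, ?_⟩ <;>
    · rcases v with ⟨a, b⟩
      simp only [not_and_or, not_not, Prod.ext_iff, Prod.neg_mk, Prod.mk.injEq] at h1 h2 ⊢
      omega



abbrev SL2 := Matrix.SpecialLinearGroup (Fin 2) ℤ

namespace SL2Facts

def S : SL2 := ⟨!![1,1;0,1], by simp [Matrix.det_fin_two_of]⟩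
def T : SL2 := ⟨!![1,0;1,1], by simp [Matrix.det_fin_two_of]⟩

/-- `lin a b = a • M + b • 1` for `M = !![3,-1;1,0]`. -/
def lin (a b : ℤ) : Matrix (Fin 2) (Fin 2) ℤ := !![3*a+b, -a; a, b]

def M : SL2 := ⟨lin 1 0, by simp [lin, Matrix.det_fin_two_of]⟩

lemma S_inv : S⁻¹ = ⟨!![1,-1;0,1], by simp [Matrix.det_fin_two_of]⟩ := by
  apply inv_eq_of_mul_eq_one_right
  apply Subtype.ext
  change (S : Matrix (Fin 2) (Fin 2) ℤ) * !![1,-1;0,1] = 1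
  ext i j
  fin_cases i <;> fin_cases j <;>
    simp [S, Matrix.mul_apply, Fin.sum_univ_two]

lemma T_inv : T⁻¹ = ⟨!![1,0;-1,1], by simp [Matrix.det_fin_two_of]⟩ := by
  apply inv_eq_of_mul_eq_one_right
  apply Subtype.ext
  change (T : Matrix (Fin 2) (Fin 2) ℤ) * !![1,0;-1,1] = 1
  ext i j
  fin_cases i <;> fin_cases j <;>
    simp [T, Matrix.mul_apply, Fin.sum_univ_two]

lemma M_eq : ⁅S, T⁆ = M := by
  rw [commutatorElement_def, S_inv, T_inv]
  apply Subtype.ext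
  change (S : Matrix (Fin 2) (Fin 2) ℤ) * (T : Matrix (Fin 2) (Fin 2) ℤ) * !![1,-1;0,1] * !![1,0;-1,1] = (M : Matrix (Fin 2) (Fin 2) ℤ)
  ext i j
  fin_cases i <;> fin_cases j <;>
    simp [S, T, M, lin, Matrix.mul_apply, Fin.sum_univ_two]

lemma lin_mul_lin (a b c d : ℤ) :
    lin a b * lin c d = lin (3*a*c + a*d + b*c) (b*d - a*c) := by
  ext i j
  fin_cases i <;> fin_cases j <;>
    (simp [lin, Matrix.mul_apply, Fin.sum_univ_two]; ring)

lemma lin_one : lin 0 1 = 1 := by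
  ext i j
  fin_cases i <;> fin_cases j <;> simp [lin, Matrix.one_apply]

/-- powers of `M` (positive nat) are `lin a b` with `1 ≤ a`, `0 ≤ a + b`. -/
lemma pow_linear (n : ℕ) (hn : n ≠ 0) :
    ∃ a b : ℤ, ((M ^ n : SL2) : Matrix (Fin 2) (Fin 2) ℤ) = lin a b
      ∧ 1 ≤ a ∧ 0 ≤ a + b := by
  induction n with
  | zero => omega
  | succ n ih =>
    rcases Nat.eq_zero_or_pos n with rfl | hpos
    · exact ⟨1, 0, by rw [pow_one]; rfl, by omega, by omega⟩
    · obtain ⟨a, b, hab, ha, hab2⟩ := ih (by omega)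
      have : ((M ^ (n+1) : SL2) : Matrix (Fin 2) (Fin 2) ℤ)
          = ((M ^ n : SL2) : Matrix (Fin 2) (Fin 2) ℤ) * lin 1 0 := by
        rw [pow_succ, Matrix.SpecialLinearGroup.coe_mul]; rfl
      rw [this, hab, lin_mul_lin]
      exact ⟨3*a+b, -a, by ring_nf, by omega, by omega⟩

lemma det_lin (a b : ℤ) : (lin a b).det = a^2 + 3*a*b + b^2 := by
  rw [lin, Matrix.det_fin_two_of]; ring

/-- all nonzero integer powers of `M` are `lin a b` with `a ≠ 0`. -/
lemma zpow_linear (n : ℤ) (hn : n ≠ 0) :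
    ∃ a b : ℤ, ((M ^ n : SL2) : Matrix (Fin 2) (Fin 2) ℤ) = lin a b ∧ a ≠ 0 := by
  rcases lt_or_gt_of_ne hn with hneg | hpos
  · obtain ⟨a, b, hab, ha, _⟩ := pow_linear (-n).toNat (by omega)
    have hX : (M ^ ((-n).toNat : ℕ) : SL2) = (M ^ n)⁻¹ := by
      rw [← zpow_natCast, Int.toNat_of_nonneg (by omega), ← _root_.zpow_neg]
    have hdet : a^2 + 3*a*b + b^2 = 1 := by
      have hp := (M ^ ((-n).toNat : ℕ) : SL2).property
      rw [hab, det_lin] at hp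
      exact hp
    have hC : lin a b * lin (-a) (3*a+b) = 1 := by
      rw [lin_mul_lin]
      have e1 : 3*a*(-a) + a*(3*a+b) + b*(-a) = 0 := by ring
      have e2 : b*(3*a+b) - a*(-a) = 1 := by nlinarith [hdet]
      rw [e1, e2, lin_one]
    refine ⟨-a, 3*a+b, ?_, by omega⟩
    have h1 : ((M ^ n : SL2) : Matrix (Fin 2) (Fin 2) ℤ) * lin a b = 1 := by
      rw [← hab, ← Matrix.SpecialLinearGroup.coe_mul, hX, mul_inv_cancel]; rfl
    calc ((M ^ n : SL2) : Matrix (Fin 2) (Fin 2) ℤ)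
        = ((M ^ n : SL2) : Matrix (Fin 2) (Fin 2) ℤ) * (lin a b * lin (-a) (3*a+b)) := by
          rw [hC, mul_one]
      _ = (((M ^ n : SL2) : Matrix (Fin 2) (Fin 2) ℤ) * lin a b) * lin (-a) (3*a+b) := by
          rw [mul_assoc]
      _ = lin (-a) (3*a+b) := by rw [h1, one_mul]
  · obtain ⟨a, b, hab, ha, _⟩ := pow_linear n.toNat (by omega)
    refine ⟨a, b, ?_, by omega⟩
    rw [show (M : SL2) ^ n = M ^ n.toNat by
      rw [← zpow_natCast, Int.toNat_of_nonneg (by omega)], hab]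

/-- `lin' a b = a • M' + b • 1` for the conjugate `M' = S M S⁻¹ = !![4,-5;1,-1]`. -/
def lin' (a b : ℤ) : Matrix (Fin 2) (Fin 2) ℤ := !![4*a+b, -5*a; a, b-a]

lemma conj_lin (a b : ℤ) :
    (S : Matrix (Fin 2) (Fin 2) ℤ) * lin a b * ((S⁻¹ : SL2) : Matrix (Fin 2) (Fin 2) ℤ)
      = lin' a b := by
  rw [S_inv]
  ext i j
  fin_cases i <;> fin_cases j <;>
    simp [S, lin, lin', Matrix.mul_apply, Fin.sum_univ_two] <;> ring

/-- The key matrix fact: `M^n` and `S M^n S⁻¹` do not commute for `n ≠ 0`. -/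
theorem not_commute_conj (n : ℤ) (hn : n ≠ 0) :
    ¬ Commute (M ^ n : SL2) (S * M ^ n * S⁻¹) := by
  intro hc
  obtain ⟨a, b, hab, ha⟩ := zpow_linear n hn
  have hval : ((S * M ^ n * S⁻¹ : SL2) : Matrix (Fin 2) (Fin 2) ℤ) = lin' a b := by
    rw [Matrix.SpecialLinearGroup.coe_mul, Matrix.SpecialLinearGroup.coe_mul, hab, conj_lin]
  have heq : M ^ n * (S * M ^ n * S⁻¹) = S * M ^ n * S⁻¹ * M ^ n := hc
  have h1 : ((M ^ n * (S * M ^ n * S⁻¹) : SL2) : Matrix (Fin 2) (Fin 2) ℤ)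
      = lin a b * lin' a b := by
    rw [Matrix.SpecialLinearGroup.coe_mul, hab, hval]
  have h2 : ((S * M ^ n * S⁻¹ * M ^ n : SL2) : Matrix (Fin 2) (Fin 2) ℤ)
      = lin' a b * lin a b := by
    rw [Matrix.SpecialLinearGroup.coe_mul, hab, hval]
  have hmat : lin a b * lin' a b = lin' a b * lin a b := by
    rw [← h1, ← h2, heq]
  have h00 := congrFun (congrFun hmat 0) 0
  simp [lin, lin', Matrix.mul_apply, Fin.sum_univ_two] at h00
  have haa : a * a = 0 := by linarith
  exact ha (mul_self_eq_zero.mp haa)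

end SL2Facts


open Monoid Monoid.PushoutI Monoid.CoprodI Subgroup Function

section Amalgam

variable {G : Bool → Type} [∀ i, Group (G i)] (r : ∀ i, G i)

/-- the two maps from `ℤ` sending the generator to the amalgamated elements -/
abbrev phi : ∀ i, Multiplicative ℤ →* G i := fun i => zpowersHom _ (r i)

variable {r}

lemma mem_range_phi {i : Bool} {x : G i} :
    x ∈ (phi r i).range ↔ ∃ n : ℤ, (r i) ^ n = x := by
  constructor
  · rintro ⟨h, rfl⟩; exact ⟨h.toAdd, rfl⟩
  · rintro ⟨n, rfl⟩; exact ⟨Multiplicative.ofAdd n, rfl⟩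

/-- product of a list of letters in the pushout -/
def wprod (L : List (Σ i, G i)) : PushoutI (phi r) :=
  (L.map fun l => PushoutI.of (φ := phi r) l.1 l.2).prod

lemma wprod_nil : wprod (r := r) ([] : List (Σ i, G i)) = 1 := rfl

lemma wprod_cons (a : Σ i, G i) (L : List (Σ i, G i)) :
    wprod (a :: L) = PushoutI.of (φ := phi r) a.1 a.2 * wprod L := by
  simp [wprod]

lemma wprod_append (L₁ L₂ : List (Σ i, G i)) :
    wprod (L₁ ++ L₂) = wprod (r := r) L₁ * wprod L₂ := by
  simp [wprod]

/-- `RL L`: the letters of `L` are a reduced word -/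
def RL (L : List (Σ i, G i)) : Prop :=
  (∀ l ∈ L, l.2 ∉ (phi r l.1).range) ∧ L.Chain' (fun a b => a.1 ≠ b.1)

/-- a nontrivial letter from the transversal is not in the range -/
lemma transversal_letter_not_range {d : NormalWord.Transversal (phi r)} {i : Bool} {g : G i}
    (h1 : g ∈ d.set i) (h2 : g ≠ 1) : g ∉ (phi r i).range := by
  intro hrange
  apply h2
  have hinjc := (d.compl i).1
  have := hinjc (a₁ := (⟨⟨g, hrange⟩, ⟨1, d.one_mem i⟩⟩ : ((phi r i).range : Set (G i)) × d.set i))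
    (a₂ := (⟨⟨1, one_mem _⟩, ⟨g, h1⟩⟩ : ((phi r i).range : Set (G i)) × d.set i))
    (by simp)
  simpa using (congrArg (fun p => (p.1 : G i)) this)

lemma ofCoprodI_word_prod (W : Word G) :
    ofCoprodI (φ := phi r) W.prod = wprod W.toList := by
  rw [Word.prod, map_list_prod, List.map_map, wprod]
  congr 1

/-- Existence of reduced representations -/
lemma exists_rep (hinj : ∀ i, Function.Injective (phi r i)) (g : PushoutI (phi r)) :
    ∃ (h : Multiplicative ℤ) (L : List (Σ i, G i)), RL (r := r) L ∧
      g = base (phi r) h * wprod L := by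
  classical
  obtain ⟨d⟩ := NormalWord.transversal_nonempty (phi r) hinj
  set w : NormalWord d := g • NormalWord.empty with hw
  have hprod : w.prod = g := by
    rw [hw, NormalWord.prod_smul, NormalWord.prod_empty, mul_one]
  refine ⟨w.head, w.toList, ⟨?_, w.chain_ne⟩, ?_⟩
  · intro l hl
    exact transversal_letter_not_range (w.normalized l.1 l.2 hl) (w.ne_one l hl)
  · rw [← hprod, NormalWord.prod, ofCoprodI_word_prod]
/-- Uniqueness of the sequence of indices of a reduced representation -/
lemma index_unique (hinj : ∀ i, Function.Injective (phi r i))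
    {h₁ h₂ : Multiplicative ℤ} {L₁ L₂ : List (Σ i, G i)}
    (H₁ : RL (r := r) L₁) (H₂ : RL (r := r) L₂)
    (heq : base (phi r) h₁ * wprod L₁ = base (phi r) h₂ * wprod L₂) :
    L₁.map Sigma.fst = L₂.map Sigma.fst := by
  classical
  obtain ⟨d⟩ := NormalWord.transversal_nonempty (phi r) hinj
  have ne_one : ∀ (L : List (Σ i, G i)), RL (r := r) L → ∀ l ∈ L, l.2 ≠ 1 := by
    intro L HL l hl he
    exact HL.1 l hl (he ▸ one_mem _)
  set W₁ : Word G := ⟨L₁, ne_one L₁ H₁, H₁.2⟩ with hW₁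
  set W₂ : Word G := ⟨L₂, ne_one L₂ H₂, H₂.2⟩ with hW₂
  have hred₁ : PushoutI.Reduced (phi r) W₁ := fun l hl => H₁.1 l hl
  have hred₂ : PushoutI.Reduced (phi r) W₂ := fun l hl => H₂.1 l hl
  obtain ⟨w₁, hw₁prod, hw₁map⟩ := hred₁.exists_normalWord_prod_eq d
  obtain ⟨w₂, hw₂prod, hw₂map⟩ := hred₂.exists_normalWord_prod_eq d
  have hps : (h₁ • w₁).prod = (h₂ • w₂).prod := by
    rw [NormalWord.prod_base_smul, NormalWord.prod_base_smul, hw₁prod, hw₂prod,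
      ofCoprodI_word_prod, ofCoprodI_word_prod]
    exact heq
  have : (h₁ • w₁) = (h₂ • w₂) := NormalWord.prod_injective hps
  have hlists : w₁.toList = w₂.toList := by
    have := congrArg (fun w : NormalWord d => w.toList) this
    simpa [NormalWord.base_smul_def'] using this
  rw [← hw₁map, ← hw₂map, hlists]

end Amalgam

section Main

variable {G : Bool → Type} [∀ i, Group (G i)] {r : ∀ i, G i}

lemma conj_commute_of_commute {Gr : Type*} [Group Gr] {a b : Gr} (u : Gr) (h : Commute a b) :
    Commute (u*a*u⁻¹) (u*b*u⁻¹) := by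
  unfold Commute SemiconjBy at h ⊢
  calc u*a*u⁻¹*(u*b*u⁻¹) = u*(a*b)*u⁻¹ := by group
    _ = u*(b*a)*u⁻¹ := by rw [h]
    _ = u*b*u⁻¹*(u*a*u⁻¹) := by group

lemma hP_conj {Gr : Type*} [Group Gr] {g : Gr} (hP : ∀ x, Commute g (x*g*x⁻¹)) (u : Gr) :
    ∀ x, Commute (u*g*u⁻¹) (x*(u*g*u⁻¹)*x⁻¹) := by
  intro x
  have h2 := conj_commute_of_commute u (hP (u⁻¹*x*u))
  have e : x*(u*g*u⁻¹)*x⁻¹ = u*((u⁻¹*x*u)*g*(u⁻¹*x*u)⁻¹)*u⁻¹ := by group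
  rw [e]
  exact h2

lemma conj_ne_one {Gr : Type*} [Group Gr] {g : Gr} (u : Gr) (h : g ≠ 1) : u*g*u⁻¹ ≠ 1 := by
  intro he
  apply h
  have := congrArg (fun z => u⁻¹ * z * u) he
  simp only [mul_one] at this
  calc g = u⁻¹ * (u*g*u⁻¹) * u := by group
    _ = u⁻¹ * 1 * u := by rw [he]
    _ = 1 := by group

lemma not_range_of_e (e : ∀ i, G i →* Multiplicative (ℤ×ℤ)) (he_r : ∀ i, e i (r i) = 1)
    {i : Bool} {x : G i} (hx : e i x ≠ 1) : x ∉ (phi r i).range := by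
  rw [mem_range_phi]
  rintro ⟨n, rfl⟩
  apply hx
  rw [map_zpow, he_r, one_zpow]

lemma not_range_absorb {i : Bool} {x : G i} (hx : x ∉ (phi r i).range) (h : Multiplicative ℤ) :
    phi r i h * x ∉ (phi r i).range := by
  rintro ⟨y, hy⟩
  exact hx ⟨h⁻¹ * y, by rw [map_mul, hy, map_inv]; group⟩

lemma absorb (h : Multiplicative ℤ) (i : Bool) (x : G i) (L : List (Σ i, G i)) :
    base (phi r) h * wprod (⟨i,x⟩ :: L) = wprod (r := r) (⟨i, phi r i h * x⟩ :: L) := by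
  rw [wprod_cons, wprod_cons, ← mul_assoc, ← of_apply_eq_base (phi r) i h, ← map_mul]

lemma chain_fst_replace {i : Bool} {a b : G i} {L : List (Σ i, G i)}
    (h : List.Chain' (fun p q : (Σ i, G i) => p.1 ≠ q.1) (⟨i,a⟩ :: L)) :
    List.Chain' (fun p q : (Σ i, G i) => p.1 ≠ q.1) (⟨i,b⟩ :: L) := by
  rw [List.Chain', List.isChain_cons] at h ⊢
  exact h

/-- choice of an auxiliary letter avoiding three cosets -/
lemma exists_c (e : ∀ i, G i →* Multiplicative (ℤ×ℤ)) (uu vv : ∀ i, G i)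
    (he_u : ∀ i, e i (uu i) = Multiplicative.ofAdd (1,0))
    (he_v : ∀ i, e i (vv i) = Multiplicative.ofAdd (0,1))
    (i : Bool) (aval : Multiplicative (ℤ×ℤ)) :
    ∃ c : G i, e i c ≠ 1 ∧ e i c ≠ aval ∧ e i c ≠ aval⁻¹ := by
  obtain ⟨w, hw, h0, hv, hnv⟩ := exists_avoid aval.toAdd
  have key : ∀ c : G i, e i c = Multiplicative.ofAdd w →
      e i c ≠ 1 ∧ e i c ≠ aval ∧ e i c ≠ aval⁻¹ := by
    intro c hc
    rw [hc]
    refine ⟨?_, ?_, ?_⟩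
    · intro hh; exact h0 (by simpa using congrArg Multiplicative.toAdd hh)
    · intro hh; exact hv (by simpa using congrArg Multiplicative.toAdd hh)
    · intro hh
      apply hnv
      have := congrArg Multiplicative.toAdd hh
      simpa using this
  rcases hw with rfl | rfl | rfl
  · exact ⟨uu i, key _ (he_u i)⟩
  · exact ⟨vv i, key _ (he_v i)⟩
  · refine ⟨uu i * vv i, key _ ?_⟩
    rw [map_mul, he_u, he_v, ← ofAdd_add]
    rfl

variable (hinj : ∀ i, Function.Injective (phi r i))
  (e : ∀ i, G i →* Multiplicative (ℤ×ℤ)) (uu vv : ∀ i, G i)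
  (he_r : ∀ i, e i (r i) = 1)
  (he_u : ∀ i, e i (uu i) = Multiplicative.ofAdd (1,0))
  (he_v : ∀ i, e i (vv i) = Multiplicative.ofAdd (0,1))
  (hbase : ∀ n : ℤ, n ≠ 0 →
    ¬ Commute ((r true)^n) (uu true * (r true)^n * (uu true)⁻¹))

include hinj hbase in
lemma case_base (h : Multiplicative ℤ) (hne : base (phi r) h ≠ 1)
    (hP : ∀ x, Commute (base (phi r) h) (x * base (phi r) h * x⁻¹)) : False := by
  have hn : h.toAdd ≠ 0 := by
    intro h0
    apply hne
    have : h = 1 := by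
      have := congrArg Multiplicative.ofAdd h0
      simpa using this
    rw [this, map_one]
  have hphi : phi r true h = (r true) ^ h.toAdd := rfl
  have hg : base (phi r) h = PushoutI.of (φ := phi r) true ((r true) ^ h.toAdd) := by
    rw [← hphi, of_apply_eq_base (phi r) true h]
  have hc := hP (PushoutI.of (φ := phi r) true (uu true))
  rw [hg] at hc
  rw [← map_inv, ← map_mul, ← map_mul] at hc
  have hc2 : Commute ((r true) ^ h.toAdd) (uu true * (r true) ^ h.toAdd * (uu true)⁻¹) := by
    have h3 := hc.eq
    rw [← map_mul, ← map_mul] at h3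
    exact PushoutI.of_injective hinj true h3
  exact hbase _ hn hc2

include hinj he_r he_u in
lemma case_single {i : Bool} {x : G i} (hxr : x ∉ (phi r i).range)
    (hP : ∀ y, Commute (PushoutI.of (φ := phi r) i x)
      (y * PushoutI.of (φ := phi r) i x * y⁻¹)) : False := by
  classical
  set j := !i with hj
  have hij : i ≠ j := by cases i <;> simp [hj]
  set t := uu j with ht
  have htr : t ∉ (phi r j).range := by
    apply not_range_of_e e he_r
    rw [ht, he_u]
    intro hh
    have := congrArg Multiplicative.toAdd hh
    simp at this
  have htr' : t⁻¹ ∉ (phi r j).range := by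
    intro hh
    exact htr ((inv_mem_iff (x := t)).mp hh)
  have hc := (hP (PushoutI.of (φ := phi r) j t)).eq
  have key : base (phi r) 1 * wprod (r := r) [⟨i,x⟩,⟨j,t⟩,⟨i,x⟩,⟨j,t⁻¹⟩]
      = base (phi r) 1 * wprod (r := r) [⟨j,t⟩,⟨i,x⟩,⟨j,t⁻¹⟩,⟨i,x⟩] := by
    rw [map_one, one_mul, one_mul]
    simp only [wprod_cons, wprod_nil, map_inv, mul_one]
    calc PushoutI.of (φ := phi r) i x * (PushoutI.of (φ := phi r) j t *
          (PushoutI.of (φ := phi r) i x * (PushoutI.of (φ := phi r) j t)⁻¹))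
        = PushoutI.of (φ := phi r) i x * (PushoutI.of (φ := phi r) j t *
          PushoutI.of (φ := phi r) i x * (PushoutI.of (φ := phi r) j t)⁻¹) := by group
      _ = PushoutI.of (φ := phi r) j t * PushoutI.of (φ := phi r) i x *
          (PushoutI.of (φ := phi r) j t)⁻¹ * PushoutI.of (φ := phi r) i x := by rw [hc]
      _ = _ := by group
  have hRL1 : RL (r := r) [⟨i,x⟩,⟨j,t⟩,⟨i,x⟩,⟨j,t⁻¹⟩] := by
    constructor
    · intro l hl
      simp only [List.mem_cons, List.not_mem_nil, or_false] at hl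
      rcases hl with rfl | rfl | rfl | rfl <;> first
        | exact hxr
        | exact htr
        | exact htr'
    · simp only [List.Chain', List.isChain_cons_cons, List.isChain_singleton, and_true]
      exact ⟨hij, hij.symm, hij⟩
  have hRL2 : RL (r := r) [⟨j,t⟩,⟨i,x⟩,⟨j,t⁻¹⟩,⟨i,x⟩] := by
    constructor
    · intro l hl
      simp only [List.mem_cons, List.not_mem_nil, or_false] at hl
      rcases hl with rfl | rfl | rfl | rfl <;> first
        | exact hxr
        | exact htr
        | exact htr'
    · simp only [List.Chain', List.isChain_cons_cons, List.isChain_singleton, and_true]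
      exact ⟨hij.symm, hij, hij.symm⟩
  have hidx := index_unique hinj hRL1 hRL2 key
  simp only [List.map_cons, List.map_nil, List.cons.injEq] at hidx
  exact hij hidx.1

include hinj e uu vv he_r he_u he_v hbase in
lemma main_aux : ∀ n : ℕ, ∀ (g : PushoutI (phi r)) (h : Multiplicative ℤ)
    (L : List (Σ i, G i)), RL (r := r) L → g = base (phi r) h * wprod L →
    L.length ≤ n → g ≠ 1 → (∀ x, Commute g (x*g*x⁻¹)) → False := by
  intro n
  induction n with
  | zero =>
    intro g h L hRL hrep hlen hne hP
    have hL : L = [] := List.eq_nil_of_length_eq_zero (Nat.le_zero.mp hlen)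
    subst hL
    rw [wprod_nil, mul_one] at hrep
    subst hrep
    exact case_base hinj uu hbase h hne hP
  | succ n IH =>
    intro g h L hRL hrep hlen hne hP
    rcases L with _ | ⟨⟨i, x⟩, L'⟩
    · rw [wprod_nil, mul_one] at hrep
      subst hrep
      exact case_base hinj uu hbase h hne hP
    · -- absorb the base element into the first letter
      have hxrange : x ∉ (phi r i).range := hRL.1 ⟨i, x⟩ List.mem_cons_self
      obtain ⟨x', hx'def⟩ : ∃ y : G i, y = phi r i h * x := ⟨_, rfl⟩
      have hx'range : x' ∉ (phi r i).range := hx'def ▸ not_range_absorb hxrange h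
      have hrep' : g = wprod (r := r) (⟨i, x'⟩ :: L') := by
        rw [hrep, absorb, ← hx'def]
      rcases List.eq_nil_or_concat L' with rfl | ⟨Lmid, ⟨il, xl⟩, hconcat⟩
      · -- single letter case
        rw [wprod_cons, wprod_nil, mul_one] at hrep'
        subst hrep'
        exact case_single hinj e uu he_r he_u hx'range hP
      · rw [List.concat_eq_append] at hconcat
        subst hconcat
        have hchain : List.Chain' (fun p q : (Σ i, G i) => p.1 ≠ q.1)
            (⟨i, x'⟩ :: (Lmid ++ [⟨il, xl⟩])) := chain_fst_replace hRL.2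
        have hmem : ∀ l ∈ Lmid ++ [⟨il, xl⟩], Sigma.snd l ∉ (phi r l.1).range := by
          intro l hl
          exact hRL.1 l (List.mem_cons_of_mem _ hl)
        have hxlrange : xl ∉ (phi r il).range := hmem ⟨il, xl⟩ (by simp)
        by_cases hil : il = i
        · -- not cyclically reduced: conjugate to shorten
          subst hil
          -- g = wprod (⟨il,x'⟩ :: Lmid) * of il xl
          have hsplit : g = wprod (r := r) (⟨il, x'⟩ :: Lmid) *
              PushoutI.of (φ := phi r) il xl := by
            rw [hrep']
            rw [show (⟨il, x'⟩ :: (Lmid ++ [⟨il, xl⟩]) : List (Σ i, G i))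
                = (⟨il, x'⟩ :: Lmid) ++ [⟨il, xl⟩] by simp]
            simp only [wprod_append, wprod_cons, wprod_nil, mul_one]
          obtain ⟨u₀, hu₀⟩ : ∃ y, y = PushoutI.of (φ := phi r) il xl := ⟨_, rfl⟩
          obtain ⟨g', hg'⟩ : ∃ y, y = u₀ * g * u₀⁻¹ := ⟨_, rfl⟩
          have hg'rep : g' = PushoutI.of (φ := phi r) il (xl * x') * wprod (r := r) Lmid := by
            rw [hg', hsplit, wprod_cons, hu₀, map_mul]
            group
          have hg'ne : g' ≠ 1 := by rw [hg']; exact conj_ne_one _ hne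
          have hg'P : ∀ x, Commute g' (x*g'*x⁻¹) := by
            rw [hg']; exact hP_conj hP u₀
          have hchmid : List.Chain' (fun p q : (Σ i, G i) => p.1 ≠ q.1)
              (⟨il, xl * x'⟩ :: Lmid) := by
            apply chain_fst_replace
            have : (⟨il, x'⟩ :: (Lmid ++ [⟨il, xl⟩]) : List (Σ i, G i))
                = (⟨il, x'⟩ :: Lmid) ++ [⟨il, xl⟩] := by simp
            rw [this] at hchain
            exact (List.isChain_append.mp hchain).1
          have hmemmid : ∀ l ∈ Lmid, Sigma.snd l ∉ (phi r l.1).range := by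
            intro l hl
            exact hmem l (List.mem_append_left _ hl)
          by_cases hmm : xl * x' ∈ (phi r il).range
          · obtain ⟨h', hh'⟩ := hmm
            have hg'rep2 : g' = base (phi r) h' * wprod (r := r) Lmid := by
              rw [hg'rep, ← hh', of_apply_eq_base]
            refine IH g' h' Lmid ⟨hmemmid, ?_⟩ hg'rep2 ?_ hg'ne hg'P
            · rcases Lmid with _ | ⟨a, Lmid'⟩
              · exact List.isChain_nil
              · exact (List.isChain_cons.mp hchmid).2
            · simp only [List.length_cons, List.length_append, List.length_singleton] at hlen
              omega
          · have hg'rep2 : g' = base (phi r) 1 * wprod (r := r) (⟨il, xl * x'⟩ :: Lmid) := by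
              rw [map_one, one_mul, hg'rep, wprod_cons]
            refine IH g' 1 _ ⟨?_, hchmid⟩ hg'rep2 ?_ hg'ne hg'P
            · intro l hl
              rcases List.mem_cons.mp hl with rfl | hl
              · exact hmm
              · exact hmemmid l hl
            · simp only [List.length_cons, List.length_append, List.length_singleton] at hlen ⊢
              omega
        · -- cyclically reduced of length ≥ 2 : the main contradiction
          obtain ⟨c₀, hc1, hc2, hc3⟩ := exists_c e uu vv he_u he_v i (e i x')
          have hcx : c₀ * x' ∉ (phi r i).range := by
            apply not_range_of_e e he_r
            rw [map_mul]
            intro hh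
            exact hc3 (eq_inv_of_mul_eq_one_left hh)
          have hcx' : c₀⁻¹ * x' ∉ (phi r i).range := by
            apply not_range_of_e e he_r
            rw [map_mul, map_inv]
            intro hh
            exact hc2 (inv_injective (eq_inv_of_mul_eq_one_left hh))
          have hcinv : c₀⁻¹ ∉ (phi r i).range := by
            intro hh
            apply hc1
            have : c₀ ∈ (phi r i).range := (inv_mem_iff (x := c₀)).mp hh
            rw [mem_range_phi] at this
            obtain ⟨m, rfl⟩ := this
            rw [map_zpow, he_r, one_zpow]
          obtain ⟨c, hc⟩ : ∃ y, y = PushoutI.of (φ := phi r) i c₀ := ⟨_, rfl⟩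
          have hcomm := (hP c).eq
          obtain ⟨B, hB⟩ : ∃ y : List (Σ i, G i), y = Lmid ++ [⟨il, xl⟩] := ⟨_, rfl⟩
          have hWg : g = PushoutI.of (φ := phi r) i x' * wprod (r := r) B := by
            rw [hB, hrep', wprod_cons]
          obtain ⟨LHS, hLHS⟩ : ∃ y : List (Σ i, G i),
            y = (⟨i, x'⟩ :: B) ++ ((⟨i, c₀ * x'⟩ :: B) ++ [⟨i, c₀⁻¹⟩]) := ⟨_, rfl⟩
          obtain ⟨RHS, hRHS⟩ : ∃ y : List (Σ i, G i),
            y = (⟨i, c₀ * x'⟩ :: B) ++ (⟨i, c₀⁻¹ * x'⟩ :: B) := ⟨_, rfl⟩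
          have hLval : wprod (r := r) LHS = g * (c * g * c⁻¹) := by
            rw [hLHS, hWg, hc]
            simp only [wprod_append, wprod_cons, wprod_nil, map_mul, map_inv, mul_one]
            group
          have hRval : wprod (r := r) RHS = (c * g * c⁻¹) * g := by
            rw [hRHS, hWg, hc]
            simp only [wprod_append, wprod_cons, wprod_nil, map_mul, map_inv, mul_one]
            group
          have key : base (phi r) 1 * wprod (r := r) LHS = base (phi r) 1 * wprod (r := r) RHS := by
            rw [map_one, one_mul, one_mul, hLval, hRval, hcomm]
          have hlastB : B.getLast? = some ⟨il, xl⟩ := by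
            rw [hB, List.getLast?_concat]
          have hchainB : ∀ (y : G i), List.Chain' (fun p q : (Σ i, G i) => p.1 ≠ q.1)
              (⟨i, y⟩ :: B) := by
            intro y
            rw [hB]
            exact chain_fst_replace hchain
          have hmemB : ∀ l ∈ B, Sigma.snd l ∉ (phi r l.1).range := by
            rw [hB]; exact hmem
          have hmemLHS : ∀ l ∈ LHS, Sigma.snd l ∉ (phi r l.1).range := by
            intro l hl
            rw [hLHS] at hl
            simp only [List.mem_append, List.mem_cons, List.not_mem_nil, or_false] at hl
            rcases hl with (rfl | hl) | ((rfl | hl) | rfl)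
            · exact hx'range
            · exact hmemB l hl
            · exact hcx
            · exact hmemB l hl
            · exact hcinv
          have hmemRHS : ∀ l ∈ RHS, Sigma.snd l ∉ (phi r l.1).range := by
            intro l hl
            rw [hRHS] at hl
            simp only [List.mem_append, List.mem_cons, List.not_mem_nil, or_false] at hl
            rcases hl with (rfl | hl) | (rfl | hl)
            · exact hcx
            · exact hmemB l hl
            · exact hcx'
            · exact hmemB l hl
          have hlast' : ∀ (y : G i), (⟨i,y⟩ :: B).getLast? = some ⟨il, xl⟩ := by
            intro y
            rw [hB, show (⟨i,y⟩ :: (Lmid ++ [⟨il,xl⟩]) : List (Σ i, G i))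
              = (⟨i,y⟩::Lmid) ++ [⟨il,xl⟩] by simp, List.getLast?_concat]
          have hchainLHS : List.Chain' (fun p q : (Σ i, G i) => p.1 ≠ q.1) LHS := by
            rw [hLHS]
            refine List.isChain_append.mpr ⟨hchainB x', List.isChain_append.mpr
              ⟨hchainB (c₀ * x'), List.isChain_singleton _, ?_⟩, ?_⟩
            · intro p hp q hq
              rw [hlast', Option.mem_some_iff] at hp
              simp only [List.head?_cons, Option.mem_some_iff] at hq
              subst hp; subst hq
              exact hil
            · intro p hp q hq
              rw [hlast', Option.mem_some_iff] at hp
              rw [List.cons_append, List.head?_cons, Option.mem_some_iff] at hq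
              subst hp; subst hq
              exact hil
          have hchainRHS : List.Chain' (fun p q : (Σ i, G i) => p.1 ≠ q.1) RHS := by
            rw [hRHS]
            refine List.isChain_append.mpr ⟨hchainB (c₀ * x'), hchainB (c₀⁻¹ * x'), ?_⟩
            intro p hp q hq
            rw [hlast', Option.mem_some_iff] at hp
            simp only [List.head?_cons, Option.mem_some_iff] at hq
            subst hp; subst hq
            exact hil
          have hidx := index_unique hinj ⟨hmemLHS, hchainLHS⟩ ⟨hmemRHS, hchainRHS⟩ key
          have hlength := congrArg List.length hidx
          rw [hLHS, hRHS] at hlength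
          simp only [List.length_map, List.length_append, List.length_cons,
            List.length_singleton] at hlength
          omega

include hinj e uu vv he_r he_u he_v hbase in
theorem amalgam_no_weird {g : PushoutI (phi r)} (hg : g ≠ 1)
    (hP : ∀ x, Commute g (x*g*x⁻¹)) : False := by
  obtain ⟨h, L, hRL, hrep⟩ := exists_rep hinj g
  exact main_aux hinj e uu vv he_r he_u he_v hbase L.length g h L hRL hrep le_rfl hg hP

end Main

/-! ### Instantiation with free groups -/

def surfaceRelator' (k : ℕ) : FreeGroup (Fin k × Fin 2) :=
  (List.ofFn fun i : Fin k => ⁅FreeGroup.of (i, (0 : Fin 2)), FreeGroup.of (i, (1 : Fin 2))⁆).prod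

lemma map_surfaceRelator'_comm {k : ℕ} {β : Type*} [CommGroup β]
    (f : FreeGroup (Fin k × Fin 2) →* β) : f (surfaceRelator' k) = 1 := by
  rw [surfaceRelator', map_list_prod]
  apply List.prod_eq_one
  intro x hx
  rw [List.map_ofFn, List.mem_ofFn] at hx
  obtain ⟨i, rfl⟩ := hx
  simp only [Function.comp_apply, map_commutatorElement]
  exact commutatorElement_eq_one_iff_commute.mpr (Commute.all _ _)

lemma map_surfaceRelator'_succ {k : ℕ} {β : Type*} [Group β]
    (f : FreeGroup (Fin (k+1) × Fin 2) →* β) :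
    f (surfaceRelator' (k+1)) = ⁅f (FreeGroup.of (0, 0)), f (FreeGroup.of (0, 1))⁆ *
      (List.ofFn (fun i : Fin k =>
        ⁅f (FreeGroup.of (i.succ, 0)), f (FreeGroup.of (i.succ, 1))⁆)).prod := by
  rw [surfaceRelator', map_list_prod, List.map_ofFn, List.ofFn_succ, List.prod_cons]
  simp only [Function.comp_apply, map_commutatorElement]

section Inst

variable (m : ℕ)

/-- the two factor groups -/
@[reducible] def GG : Bool → Type := fun i =>
  Bool.rec (FreeGroup (Fin (m+1) × Fin 2)) (FreeGroup (Fin 2)) i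

instance : ∀ i, Group (GG m i) := fun i => by cases i <;> exact inferInstance

/-- the amalgamated elements -/
def rr : ∀ i, GG m i := fun i => match i with
  | true => ⁅FreeGroup.of (0 : Fin 2), FreeGroup.of (1 : Fin 2)⁆
  | false => (surfaceRelator' (m+1))⁻¹

def uuI : ∀ i, GG m i := fun i => match i with
  | true => FreeGroup.of (0 : Fin 2)
  | false => FreeGroup.of ((0 : Fin (m+1)), (0 : Fin 2))

def vvI : ∀ i, GG m i := fun i => match i with
  | true => FreeGroup.of (1 : Fin 2)
  | false => FreeGroup.of ((0 : Fin (m+1)), (1 : Fin 2))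

lemma rr_true : rr m true = ⁅FreeGroup.of (0 : Fin 2), FreeGroup.of (1 : Fin 2)⁆ := rfl
lemma rr_false : rr m false = (surfaceRelator' (m+1))⁻¹ := rfl

/-- the abelianization-type homs -/
def eeI : ∀ i, GG m i →* Multiplicative (ℤ × ℤ) := fun i => match i with
  | true => FreeGroup.lift (fun j : Fin 2 =>
      Multiplicative.ofAdd (if j = 0 then ((1:ℤ),(0:ℤ)) else ((0:ℤ),(1:ℤ))))
  | false => FreeGroup.lift (fun p : Fin (m+1) × Fin 2 =>
      if p.1 = 0 then Multiplicative.ofAdd (if p.2 = 0 then ((1:ℤ),(0:ℤ)) else ((0:ℤ),(1:ℤ)))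
      else 1)

lemma eeI_true_of (j : Fin 2) : eeI m true (FreeGroup.of j)
    = Multiplicative.ofAdd (if j = 0 then ((1:ℤ),(0:ℤ)) else ((0:ℤ),(1:ℤ))) :=
  FreeGroup.lift_apply_of

lemma eeI_false_of (p : Fin (m+1) × Fin 2) : eeI m false (FreeGroup.of p)
    = if p.1 = 0 then Multiplicative.ofAdd (if p.2 = 0 then ((1:ℤ),(0:ℤ)) else ((0:ℤ),(1:ℤ)))
      else 1 :=
  FreeGroup.lift_apply_of

lemma he_r_I : ∀ i, eeI m i (rr m i) = 1 := by
  intro i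
  cases i
  · rw [rr_false, map_inv, map_surfaceRelator'_comm, inv_one]
  · rw [rr_true, map_commutatorElement]
    exact commutatorElement_eq_one_iff_commute.mpr (Commute.all _ _)

lemma he_u_I : ∀ i, eeI m i (uuI m i) = Multiplicative.ofAdd (1,0) := by
  intro i
  cases i
  · rw [show uuI m false = FreeGroup.of ((0 : Fin (m+1)), (0 : Fin 2)) from rfl, eeI_false_of]
    norm_num
  · rw [show uuI m true = FreeGroup.of (0 : Fin 2) from rfl, eeI_true_of]
    norm_num

lemma he_v_I : ∀ i, eeI m i (vvI m i) = Multiplicative.ofAdd (0,1) := by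
  intro i
  cases i
  · rw [show vvI m false = FreeGroup.of ((0 : Fin (m+1)), (1 : Fin 2)) from rfl, eeI_false_of]
    norm_num
  · rw [show vvI m true = FreeGroup.of (1 : Fin 2) from rfl, eeI_true_of]
    norm_num

/-- homs to the Heisenberg group -/
def psiI : ∀ i, GG m i →* H3 := fun i => match i with
  | true => FreeGroup.lift (fun j : Fin 2 => if j = 0 then (⟨1,0,0⟩ : H3) else ⟨0,1,0⟩)
  | false => FreeGroup.lift (fun p : Fin (m+1) × Fin 2 =>
      if p.1 = 0 then (if p.2 = 0 then (⟨1,0,0⟩ : H3) else ⟨0,1,0⟩) else 1)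

lemma psiI_true_of (j : Fin 2) : psiI m true (FreeGroup.of j)
    = if j = 0 then (⟨1,0,0⟩ : H3) else ⟨0,1,0⟩ := FreeGroup.lift_apply_of

lemma psiI_false_of (p : Fin (m+1) × Fin 2) : psiI m false (FreeGroup.of p)
    = if p.1 = 0 then (if p.2 = 0 then (⟨1,0,0⟩ : H3) else ⟨0,1,0⟩) else 1 :=
  FreeGroup.lift_apply_of

lemma psi_sr : psiI m false (surfaceRelator' (m+1)) = H3.η := by
  rw [map_surfaceRelator'_succ]
  have htail : (List.ofFn (fun i : Fin m =>
      ⁅psiI m false (FreeGroup.of (i.succ, 0)), psiI m false (FreeGroup.of (i.succ, 1))⁆)).prod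
      = 1 := by
    apply List.prod_eq_one
    intro x hx
    rw [List.mem_ofFn] at hx
    obtain ⟨i, rfl⟩ := hx
    rw [psiI_false_of, psiI_false_of]
    rw [if_neg (by simp [Fin.succ_ne_zero]), if_neg (by simp [Fin.succ_ne_zero])]
    simp [commutatorElement_def]
  rw [htail, mul_one, psiI_false_of, psiI_false_of]
  norm_num
  exact H3.commutator_AB

lemma psi_r_true : psiI m true (rr m true) = H3.η := by
  rw [rr_true, map_commutatorElement, psiI_true_of, psiI_true_of]
  norm_num
  exact H3.commutator_AB

lemma psi_r_false : psiI m false (rr m false) = H3.η⁻¹ := by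
  rw [rr_false, map_inv, psi_sr]

lemma hinj_I : ∀ i, Function.Injective (phi (rr m) i) := by
  intro i
  rw [injective_iff_map_eq_one]
  intro h hh
  have hzpow : rr m i ^ h.toAdd = 1 := hh
  have hps : (psiI m i (rr m i)) ^ h.toAdd = 1 := by
    rw [← map_zpow, hzpow, map_one]
  have htoAdd : h.toAdd = 0 := by
    cases i
    · rw [psi_r_false] at hps
      exact (H3.η_inv_zpow_eq_one_iff _).mp hps
    · rw [psi_r_true] at hps
      exact (H3.η_zpow_eq_one_iff _).mp hps
  have : h = Multiplicative.ofAdd 0 := by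
    rw [← htoAdd]; rfl
  rw [this]; rfl

/-- hom to SL2 killing commuting of conjugates -/
def sigI : GG m true →* SL2 :=
  FreeGroup.lift (fun j : Fin 2 => if j = 0 then SL2Facts.S else SL2Facts.T)

lemma sigI_of (j : Fin 2) : sigI m (FreeGroup.of j)
    = if j = 0 then SL2Facts.S else SL2Facts.T := FreeGroup.lift_apply_of

lemma hbase_I : ∀ n : ℤ, n ≠ 0 →
    ¬ Commute ((rr m true)^n) (uuI m true * (rr m true)^n * (uuI m true)⁻¹) := by
  intro n hn hc
  apply SL2Facts.not_commute_conj n hn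
  have hr : sigI m (rr m true) = SL2Facts.M := by
    rw [rr_true, map_commutatorElement, sigI_of, sigI_of]
    norm_num
    exact SL2Facts.M_eq
  have hu : sigI m (uuI m true) = SL2Facts.S := by
    rw [show uuI m true = FreeGroup.of (0 : Fin 2) from rfl, sigI_of]
    norm_num
  have hmap := hc.map (sigI m)
  rwa [map_zpow, map_mul, map_mul, map_inv, map_zpow, hr, hu] at hmap

theorem pushout_no_weird {g : PushoutI (phi (rr m))} (hg : g ≠ 1)
    (hP : ∀ x, Commute g (x*g*x⁻¹)) : False :=
  amalgam_no_weird (hinj_I m) (eeI m) (uuI m) (vvI m) (he_r_I m) (he_u_I m) (he_v_I m)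
    (hbase_I m) hg hP

end Inst

/-! ### The isomorphism between the surface group and the amalgam -/

lemma surfaceRelator_eq (k : ℕ) : surfaceRelator k = surfaceRelator' k := rfl

section Iso

variable (m : ℕ)

lemma map_surfaceRelator'_ofFn {k : ℕ} {β : Type*} [Group β]
    (f : FreeGroup (Fin k × Fin 2) →* β) :
    f (surfaceRelator' k) = (List.ofFn (fun i : Fin k =>
      ⁅f (FreeGroup.of (i, 0)), f (FreeGroup.of (i, 1))⁆)).prod := by
  rw [surfaceRelator', map_list_prod, List.map_ofFn]
  exact congrArg List.prod (congrArg List.ofFn (funext fun i => by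
    simp only [Function.comp_apply, map_commutatorElement]))

lemma phi_ofAdd_one (i : Bool) : phi (rr m) i (Multiplicative.ofAdd 1) = rr m i := zpow_one _

def fgen : Fin (m+2) × Fin 2 → PushoutI (phi (rr m)) := fun p =>
  Fin.cases (motive := fun _ => PushoutI (phi (rr m)))
    (PushoutI.of (φ := phi (rr m)) true (FreeGroup.of p.2))
    (fun i' => PushoutI.of (φ := phi (rr m)) false (FreeGroup.of (i', p.2))) p.1

lemma fgen_zero (j : Fin 2) :
    fgen m (0, j) = PushoutI.of (φ := phi (rr m)) true (FreeGroup.of j) := by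
  simp [fgen]

lemma fgen_succ (i' : Fin (m+1)) (j : Fin 2) :
    fgen m (i'.succ, j) = PushoutI.of (φ := phi (rr m)) false (FreeGroup.of (i', j)) := by
  simp [fgen]

lemma hrel : ∀ rel ∈ ({surfaceRelator (m+2)} : Set (FreeGroup (Fin (m+2) × Fin 2))),
    FreeGroup.lift (fgen m) rel = 1 := by
  intro rel hrel
  rw [Set.mem_singleton_iff] at hrel
  subst hrel
  rw [surfaceRelator_eq, map_surfaceRelator'_succ]
  have hhead : ⁅(FreeGroup.lift (fgen m)) (FreeGroup.of ((0 : Fin (m+2)), (0 : Fin 2))),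
      (FreeGroup.lift (fgen m)) (FreeGroup.of ((0 : Fin (m+2)), (1 : Fin 2)))⁆
      = base (phi (rr m)) (Multiplicative.ofAdd 1) := by
    rw [FreeGroup.lift_apply_of, FreeGroup.lift_apply_of, fgen_zero, fgen_zero, ← map_commutatorElement,
      ← rr_true, ← phi_ofAdd_one, of_apply_eq_base]
  have htail : (List.ofFn (fun i : Fin (m+1) =>
      ⁅(FreeGroup.lift (fgen m)) (FreeGroup.of (i.succ, 0)),
        (FreeGroup.lift (fgen m)) (FreeGroup.of (i.succ, 1))⁆)).prod
      = (base (phi (rr m)) (Multiplicative.ofAdd 1))⁻¹ := by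
    have h1 : (PushoutI.of (φ := phi (rr m)) false) (surfaceRelator' (m+1))
        = (List.ofFn (fun i : Fin (m+1) =>
          ⁅(FreeGroup.lift (fgen m)) (FreeGroup.of (i.succ, 0)),
            (FreeGroup.lift (fgen m)) (FreeGroup.of (i.succ, 1))⁆)).prod := by
      rw [map_surfaceRelator'_ofFn]
      exact congrArg List.prod (congrArg List.ofFn (funext fun i => by
        rw [FreeGroup.lift_apply_of, FreeGroup.lift_apply_of, fgen_succ, fgen_succ]))
    rw [← h1, show surfaceRelator' (m+1) = (rr m false)⁻¹ by rw [rr_false, inv_inv],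
      map_inv, ← phi_ofAdd_one, of_apply_eq_base]
  rw [hhead, htail, mul_inv_cancel]

def fwd : SurfaceGroup (m+2) →* PushoutI (phi (rr m)) :=
  PresentedGroup.toGroup (hrel m)

lemma fwd_of (p : Fin (m+2) × Fin 2) : fwd m (PresentedGroup.of p) = fgen m p :=
  PresentedGroup.toGroup.of (hrel m)

def fA : FreeGroup (Fin 2) →* SurfaceGroup (m+2) :=
  FreeGroup.lift (fun j => PresentedGroup.of ((0 : Fin (m+2)), j))

def fB : FreeGroup (Fin (m+1) × Fin 2) →* SurfaceGroup (m+2) :=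
  FreeGroup.lift (fun p => PresentedGroup.of (p.1.succ, p.2))

lemma mk_relator :
    PresentedGroup.mk ({surfaceRelator (m+2)} : Set (FreeGroup (Fin (m+2) × Fin 2)))
      (surfaceRelator (m+2)) = 1 := by
  apply (QuotientGroup.eq_one_iff _).mpr
  exact Subgroup.subset_normalClosure (Set.mem_singleton _)

lemma key_compat : fA m ⁅FreeGroup.of (0 : Fin 2), FreeGroup.of (1 : Fin 2)⁆ *
    fB m (surfaceRelator' (m+1)) = 1 := by
  have hmk := mk_relator m
  rw [surfaceRelator_eq, map_surfaceRelator'_succ] at hmk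
  set mk' := PresentedGroup.mk ({surfaceRelator (m+2)} : Set (FreeGroup (Fin (m+2) × Fin 2)))
    with hmk'def
  have h1 : fA m ⁅FreeGroup.of (0 : Fin 2), FreeGroup.of (1 : Fin 2)⁆
      = ⁅mk' (FreeGroup.of ((0:Fin (m+2)), (0:Fin 2))),
         mk' (FreeGroup.of ((0:Fin (m+2)), (1:Fin 2)))⁆ := by
    rw [fA, map_commutatorElement, FreeGroup.lift_apply_of, FreeGroup.lift_apply_of]
    rfl
  have h2 : fB m (surfaceRelator' (m+1)) = (List.ofFn (fun i : Fin (m+1) =>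
      ⁅mk' (FreeGroup.of (i.succ, (0:Fin 2))),
       mk' (FreeGroup.of (i.succ, (1:Fin 2)))⁆)).prod := by
    rw [map_surfaceRelator'_ofFn]
    exact congrArg List.prod (congrArg List.ofFn (funext fun i => by
      rw [fB, FreeGroup.lift_apply_of, FreeGroup.lift_apply_of]
      rfl))
  rw [h1, h2]
  exact hmk

def bwd : PushoutI (phi (rr m)) →* SurfaceGroup (m+2) :=
  PushoutI.lift (fun i => match i with | true => fA m | false => fB m)
    ((fA m).comp (phi (rr m) true))
    (by
      intro i
      cases i
      · apply MonoidHom.ext_mint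
        simp only [MonoidHom.comp_apply]
        rw [phi_ofAdd_one, phi_ofAdd_one, rr_false, rr_true, map_inv]
        exact inv_eq_of_mul_eq_one_left (key_compat m)
      · rfl)

end Iso

section Iso2

variable (m : ℕ)

lemma bwd_fwd : (bwd m).comp (fwd m) = MonoidHom.id (SurfaceGroup (m+2)) := by
  apply PresentedGroup.ext
  intro p
  obtain ⟨i, j⟩ := p
  simp only [MonoidHom.comp_apply, MonoidHom.id_apply]
  induction i using Fin.cases with
  | zero =>
    rw [fwd_of, fgen_zero, bwd, PushoutI.lift_of]
    show fA m (FreeGroup.of j) = _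
    rw [fA, FreeGroup.lift_apply_of]
  | succ i' =>
    rw [fwd_of, fgen_succ, bwd, PushoutI.lift_of]
    show fB m (FreeGroup.of (i', j)) = _
    rw [fB, FreeGroup.lift_apply_of]

lemma fwd_bwd : (fwd m).comp (bwd m) = MonoidHom.id (PushoutI (phi (rr m))) := by
  apply PushoutI.hom_ext_nonempty
  intro i
  cases i
  · apply FreeGroup.ext_hom
    intro p
    simp only [MonoidHom.comp_apply, MonoidHom.id_apply]
    rw [bwd, PushoutI.lift_of]
    show fwd m (fB m (FreeGroup.of p)) = _
    rw [fB, FreeGroup.lift_apply_of, fwd_of, fgen_succ]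
  · apply FreeGroup.ext_hom
    intro j
    simp only [MonoidHom.comp_apply, MonoidHom.id_apply]
    rw [bwd, PushoutI.lift_of]
    show fwd m (fA m (FreeGroup.of j)) = _
    rw [fA, FreeGroup.lift_apply_of, fwd_of, fgen_zero]

/-- The surface group of genus `m+2` is isomorphic to the amalgam. -/
def isoSG : SurfaceGroup (m+2) ≃* PushoutI (phi (rr m)) :=
  MonoidHom.toMulEquiv (fwd m) (bwd m) (bwd_fwd m) (fwd_bwd m)

end Iso2

/-- final glue -/
theorem surfaceGroup_no_cyclic_normal (k : ℕ) (hk : 2 ≤ k)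
    (N : Subgroup (SurfaceGroup k)) (hN : N.Normal) (hcyc : IsCyclic N) :
    N = ⊥ := by
  obtain ⟨m, rfl⟩ : ∃ m, k = m + 2 := ⟨k - 2, by omega⟩
  obtain ⟨⟨gen, hgenN⟩, hgen⟩ := hcyc.exists_generator
  by_cases hgen1 : gen = 1
  · rw [Subgroup.eq_bot_iff_forall]
    intro x hx
    obtain ⟨p, hp⟩ := Subgroup.mem_zpowers_iff.mp (hgen ⟨x, hx⟩)
    have := congrArg (Subtype.val) hp
    rw [Subgroup.coe_zpow] at this
    simp only at this
    rw [← this, hgen1, one_zpow]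
  · exfalso
    have hP : ∀ x : SurfaceGroup (m+2), Commute gen (x * gen * x⁻¹) := by
      intro x
      have hmem : x * gen * x⁻¹ ∈ N := hN.conj_mem gen hgenN x
      obtain ⟨p, hp⟩ := Subgroup.mem_zpowers_iff.mp (hgen ⟨x * gen * x⁻¹, hmem⟩)
      have hval := congrArg (Subtype.val) hp
      rw [Subgroup.coe_zpow] at hval
      simp only at hval
      rw [← hval]
      exact (Commute.refl gen).zpow_right p
    set F := isoSG m with hF
    have hg' : F gen ≠ 1 := by
      intro hh
      exact hgen1 (F.injective (by rw [hh, map_one]))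
    have hP' : ∀ y, Commute (F gen) (y * F gen * y⁻¹) := by
      intro y
      have := (hP (F.symm y)).map F.toMonoidHom
      simpa [map_mul, map_inv] using this
    exact pushout_no_weird m hg' hP'
end

section
/- Let ι = (ι₁, ι₂) : S → Σ × S¹ be a map inducing an injective homomorphism on fundamental groups, where S is a closed orientable surface of genus k > 1. Then the induced map (ι₁)_* : π₁(S) → π₁(Σ) is injective. -/
open scoped commutatorElement

/-- The discrete Heisenberg group. -/
@[ext]
structure Heis where
  a : ℤ
  b : ℤ
  c : ℤ

namespace Heis

instance : Mul Heis := ⟨fun p q => ⟨p.a + q.a, p.b + q.b, p.c + q.c + p.a * q.b⟩⟩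
instance : One Heis := ⟨⟨0, 0, 0⟩⟩
instance : Inv Heis := ⟨fun p => ⟨-p.a, -p.b, -p.c + p.a * p.b⟩⟩

@[simp] theorem mul_a (p q : Heis) : (p * q).a = p.a + q.a := rfl
@[simp] theorem mul_b (p q : Heis) : (p * q).b = p.b + q.b := rfl
@[simp] theorem mul_c (p q : Heis) : (p * q).c = p.c + q.c + p.a * q.b := rfl
@[simp] theorem one_a : (1 : Heis).a = 0 := rfl
@[simp] theorem one_b : (1 : Heis).b = 0 := rfl
@[simp] theorem one_c : (1 : Heis).c = 0 := rfl
@[simp] theorem inv_a (p : Heis) : (p⁻¹).a = -p.a := rfl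
@[simp] theorem inv_b (p : Heis) : (p⁻¹).b = -p.b := rfl
@[simp] theorem inv_c (p : Heis) : (p⁻¹).c = -p.c + p.a * p.b := rfl

instance : Group Heis where
  mul_assoc p q r := by ext <;> simp <;> ring
  one_mul p := by ext <;> simp
  mul_one p := by ext <;> simp
  inv_mul_cancel p := by ext <;> simp

def X : Heis := ⟨1, 0, 0⟩
def Y : Heis := ⟨0, 1, 0⟩

theorem a_eq_zero_of_commute_Y {w : Heis} (h : w * Y = Y * w) : w.a = 0 := by
  have := congrArg Heis.c h
  simp [Y] at this
  linarith

/-- first coordinate as a hom to `Multiplicative ℤ`. -/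
def p₁ : Heis →* Multiplicative ℤ where
  toFun p := Multiplicative.ofAdd p.a
  map_one' := rfl
  map_mul' _ _ := rfl

end Heis

section aux

variable {k : ℕ}

/-- a map on generators kills the surface relator provided in each handle one of the two
generators goes to `1`. -/
theorem lift_surfaceRelator_eq_one {G : Type*} [Group G] (f : Fin k × Fin 2 → G)
    (h : ∀ i : Fin k, f (i, 0) = 1 ∨ f (i, 1) = 1) :
    FreeGroup.lift f (surfaceRelator k) = 1 := by
  unfold surfaceRelator
  rw [map_list_prod]
  apply List.prod_eq_one
  intro x hx
  simp only [List.map_ofFn, List.mem_ofFn] at hx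
  obtain ⟨i, rfl⟩ := hx
  simp only [Function.comp_apply, map_commutatorElement, FreeGroup.lift_apply_of]
  rcases h i with h' | h' <;> rw [h'] <;> simp

/-- The hom `SurfaceGroup k → Heis` sending generator `u` to `X`, generator `(j,0)` to `Y`
(where `j ≠ u.1`), and everything else to `1`. -/
noncomputable def heisHom (u : Fin k × Fin 2) (j : Fin k) (hj : j ≠ u.1) :
    SurfaceGroup k →* Heis :=
  PresentedGroup.toGroup (f := fun w => if w = u then Heis.X else if w = (j, 0) then Heis.Y else 1)
    (by
      intro r hr
      rw [Set.mem_singleton_iff] at hr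
      subst hr
      apply lift_surfaceRelator_eq_one
      intro i
      by_cases h1 : (i, (1 : Fin 2)) = u
      · left
        have h0 : (i, (0 : Fin 2)) ≠ u := by
          intro h0
          rw [← h1] at h0
          have := congrArg Prod.snd h0
          simp at this
        have h2 : (i, (0 : Fin 2)) ≠ (j, 0) := by
          intro h0
          apply hj
          have hij : i = j := congrArg Prod.fst h0
          rw [← hij, ← h1]
        simp [h0, h2]
      · right
        have h2 : (i, (1 : Fin 2)) ≠ (j, (0 : Fin 2)) := by
          intro h0
          have := congrArg Prod.snd h0
          simp at this
        simp [h1, h2])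

@[simp] theorem heisHom_of (u : Fin k × Fin 2) (j : Fin k) (hj : j ≠ u.1) (w : Fin k × Fin 2) :
    heisHom u j hj (PresentedGroup.of w) =
      if w = u then Heis.X else if w = (j, 0) then Heis.Y else 1 :=
  PresentedGroup.toGroup.of _

end aux

/-- If `ι = (ι₁, ι₂) : S → Σ × S¹` induces an injective homomorphism on fundamental
groups, where `S` has genus `k > 1` and `Σ` has genus `g ≥ 2` (so that
`π₁(S) = SurfaceGroup k`, `π₁(Σ) = SurfaceGroup g`, `π₁(S¹) = ℤ`), then the induced map
on the first factor `(ι₁)_* : π₁(S) → π₁(Σ)` is injective. -/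
theorem first_factor_injective (k g : ℕ) (hk : 1 < k) (hg : 2 ≤ g)
    (φ : SurfaceGroup k →* SurfaceGroup g × Multiplicative ℤ)
    (hφ : Function.Injective φ) :
    Function.Injective ((MonoidHom.fst (SurfaceGroup g) (Multiplicative ℤ)).comp φ) := by
  set ψ := (MonoidHom.fst (SurfaceGroup g) (Multiplicative ℤ)).comp φ with hψ
  set χ := (MonoidHom.snd (SurfaceGroup g) (Multiplicative ℤ)).comp φ with hχ
  rw [injective_iff_map_eq_one]
  intro z hz
  -- z is central
  have hcent : ∀ x : SurfaceGroup k, x * z = z * x := by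
    intro x
    have h1 : φ (x * z * x⁻¹) = φ z := by
      have hz' : φ z = (1, χ z) := by
        ext
        · exact hz
        · rfl
      rw [map_mul, map_mul, map_inv, hz']
      ext
      · simp
      · simp [mul_comm]
    have := hφ h1
    calc x * z = (x * z * x⁻¹) * x := by group
    _ = z * x := by rw [this]
  -- coordinate homs kill z
  have hcoord : ∀ (u : Fin k × Fin 2) (j : Fin k) (hj : j ≠ u.1),
      Heis.p₁.comp (heisHom u j hj) z = 1 := by
    intro u j hj
    set F := heisHom u j hj with hF
    have hY : F (PresentedGroup.of (j, 0)) = Heis.Y := by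
      rw [heisHom_of]
      have : ((j, (0 : Fin 2)) : Fin k × Fin 2) ≠ u := by
        intro h0; exact hj (congrArg Prod.fst h0)
      simp [this]
    have hcomm : F z * Heis.Y = Heis.Y * F z := by
      rw [← hY, ← map_mul, ← map_mul, hcent]
    have := Heis.a_eq_zero_of_commute_Y hcomm
    show Multiplicative.ofAdd (F z).a = 1
    rw [this]
    rfl
  -- the coordinate homs as homs to Multiplicative ℤ
  have exists_j : ∀ i : Fin k, ∃ j : Fin k, j ≠ i := by
    intro i
    by_cases h0 : i = ⟨0, by omega⟩
    · exact ⟨⟨1, by omega⟩, by rw [h0]; intro h; simpa using congrArg Fin.val h⟩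
    · exact ⟨⟨0, by omega⟩, fun h => h0 h.symm⟩
  choose jfun hjfun using exists_j
  set χu : (Fin k × Fin 2) → (SurfaceGroup k →* Multiplicative ℤ) :=
    fun u => Heis.p₁.comp (heisHom u (jfun u.1) (hjfun u.1)) with hχu
  have hχu_of : ∀ u v : Fin k × Fin 2,
      χu u (PresentedGroup.of v) = if v = u then Multiplicative.ofAdd 1 else 1 := by
    intro u v
    show Heis.p₁ _ = _
    rw [heisHom_of]
    by_cases h1 : v = u
    · rw [if_pos h1, if_pos h1]; rfl
    · rw [if_neg h1, if_neg h1]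
      by_cases h2 : v = (jfun u.1, 0)
      · rw [if_pos h2]; rfl
      · rw [if_neg h2]; exact map_one _
  have hχu_z : ∀ u, χu u z = 1 := fun u => hcoord u _ _
  -- χ is a product of the coordinate homs
  have hχz : χ z = 1 := by
    have hθ : χ = ∏ u : Fin k × Fin 2, (χu u) ^ (χ (PresentedGroup.of u)).toAdd := by
      ext v
      rw [MonoidHom.finset_prod_apply]
      rw [Finset.prod_eq_single v]
      · show χ (PresentedGroup.of v) =
            (χu v (PresentedGroup.of v)) ^ (χ (PresentedGroup.of v)).toAdd
        rw [hχu_of, if_pos rfl, ← ofAdd_zsmul]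
        simp
      · intro u _ huv
        show (χu u (PresentedGroup.of v)) ^ (χ (PresentedGroup.of u)).toAdd = 1
        rw [hχu_of, if_neg huv.symm, one_zpow]
      · intro h; exact absurd (Finset.mem_univ v) h
    rw [hθ, MonoidHom.finset_prod_apply]
    apply Finset.prod_eq_one
    intro u _
    show (χu u z) ^ (χ (PresentedGroup.of u)).toAdd = 1
    rw [hχu_z, one_zpow]
  -- conclude
  have : φ z = φ 1 := by
    ext
    · rw [map_one]; exact hz
    · rw [map_one]; exact hχz
  exact hφ this
end
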